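/- Let $A$ be a unital C*-algebra. Then the group $U_0(A)/CU(A)$ is divisible, where $U_0(A)$ is the connected component of the identity in the unitary group $U(A)$ and $CU(A)$ is the closure of the commutator subgroup of $U(A)$. -/

import Mathlib

instance unitary.instTopologicalGroup' {A : Type*} [CStarAlgebra A] :
    IsTopologicalGroup (unitary A) where
  continuous_mul := by
    apply continuous_induced_rng.2
    exact (continuous_subtype_val.comp continuous_fst).mul
      (continuous_subtype_val.comp continuous_snd)
  continuous_inv := by
    apply continuous_induced_rng.2
    exact continuous_star.comp continuous_subtype_val

open NormedSpace Complex selfAdjoint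

section helpers
variable {A : Type*} [CStarAlgebra A]

lemma expUnitary_zero' : selfAdjoint.expUnitary (0 : selfAdjoint A) = 1 := by
  ext
  simp [selfAdjoint.expUnitary]

lemma expUnitary_nsmul' (a : selfAdjoint A) (n : ℕ) :
    selfAdjoint.expUnitary a ^ n = selfAdjoint.expUnitary (n • a) := by
  induction n with
  | zero => simp [expUnitary_zero']
  | succ n ih =>
      have hc : Commute ((n • a : selfAdjoint A) : A) (a : A) := by
        have : ((n • a : selfAdjoint A) : A) = n • (a : A) :=
          AddSubgroup.coe_nsmul _ _ _
        rw [this]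
        exact (Commute.refl (a : A)).smul_left n
      rw [pow_succ, ih, ← hc.expUnitary_add, succ_nsmul]

lemma expUnitary_neg' (a : selfAdjoint A) :
    selfAdjoint.expUnitary (-a) = (selfAdjoint.expUnitary a)⁻¹ := by
  have hc : Commute ((a : A)) ((-a : selfAdjoint A) : A) := by
    have : ((-a : selfAdjoint A) : A) = -(a : A) := rfl
    rw [this]; exact (Commute.refl (a : A)).neg_right
  refine (eq_inv_of_mul_eq_one_right ?_)
  rw [← hc.expUnitary_add, add_neg_cancel, expUnitary_zero']

lemma expUnitary_mem_U₀ (a : selfAdjoint A) :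
    selfAdjoint.expUnitary a ∈ connectedComponent (1 : unitary A) := by
  apply pathComponent_subset_component
  have hcont : Continuous fun t : unitInterval => selfAdjoint.expUnitary (((t : ℝ)) • a) := by
    apply Continuous.subtype_mk
    have : ∀ t : unitInterval, (NormedSpace.exp ((I • (((t : ℝ) • a : selfAdjoint A) : A)) : A))
        = NormedSpace.exp (((t : ℝ) : ℂ) • ((I • (a : A)) : A)) := by
      intro t
      congr 1
      rw [selfAdjoint.val_smul, ← Complex.coe_smul, smul_comm]
    show Continuous fun t : unitInterval => NormedSpace.exp ((I • (((t : ℝ) • a : selfAdjoint A) : A)) : A)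
    refine continuous_congr (fun t => (this t).symm) |>.mp ?_
    let +nondep : NormedAlgebra ℚ A := .restrictScalars ℚ ℂ A
    exact exp_continuous.comp (((Complex.continuous_ofReal.comp continuous_subtype_val).smul continuous_const))
  have h0 : selfAdjoint.expUnitary (((0 : unitInterval) : ℝ) • a) = 1 := by
    norm_num [expUnitary_zero']
  have h1 : selfAdjoint.expUnitary (((1 : unitInterval) : ℝ) • a) = selfAdjoint.expUnitary a := by
    norm_num
  exact ⟨⟨⟨_, hcont⟩, h0, h1⟩⟩
end helpers

section log
variable {A : Type*} [CStarAlgebra A]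

lemma expUnitary_surj_near (u : unitary A) (h : ‖(u : A) - 1‖ < 2) :
    ∃ a : selfAdjoint A, selfAdjoint.expUnitary a = u := by
  nontriviality A
  have hnormal : IsStarNormal (u : A) := isStarNormal_of_mem_unitary u.2
  have hsp : ∀ z ∈ spectrum ℂ (u : A), ‖z‖ = 1 := fun z hz =>
    mem_sphere_zero_iff_norm.mp (Unitary.spectrum_subset_circle u hz)
  have hne : ∀ z ∈ spectrum ℂ (u : A), z ≠ -1 := by
    intro z hz hcontra
    have h1 : z - 1 ∈ spectrum ℂ ((u : A) - 1) := by
      have : ((u : A) - 1) = (u : A) - algebraMap ℂ A 1 := by simp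
      rw [this, ← spectrum.sub_singleton_eq]
      exact Set.sub_mem_sub hz rfl
    have := spectrum.norm_le_norm_of_mem h1
    rw [hcontra] at this
    norm_num at this
    linarith
  have hslit : ∀ z ∈ spectrum ℂ (u : A), z ∈ Complex.slitPlane := by
    intro z hz
    rw [Complex.mem_slitPlane_iff]
    by_contra hc
    push_neg at hc
    obtain ⟨hre, him⟩ := hc
    have hnorm := hsp z hz
    have hz' : z = ((z.re : ℂ)) := Complex.ext rfl (by simp [him])
    rw [hz'] at hnorm
    rw [Complex.norm_real, Real.norm_eq_abs, abs_of_nonpos hre] at hnorm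
    exact hne z hz (by rw [hz']; norm_num [show z.re = -1 by linarith])
  set f : ℂ → ℂ := fun z => (Complex.arg z : ℂ) with hf
  have hcont : ContinuousOn f (spectrum ℂ (u : A)) := fun z hz =>
    (Complex.continuous_ofReal.continuousAt.comp
      (Complex.continuousAt_arg (hslit z hz))).continuousWithinAt
  set a₀ : A := cfc f (u : A) with ha₀
  have ha_sa : IsSelfAdjoint a₀ := by
    rw [IsSelfAdjoint, ha₀, ← cfc_star]
    exact cfc_congr fun z _ => Complex.conj_ofReal _
  have hstar : IsStarNormal (cfc (fun z => I * f z) (u : A)) := cfc_predicate _ _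
  have hexp : NormedSpace.exp (I • a₀) = (u : A) := by
    have h1 : I • a₀ = cfc (fun z => I * f z) (u : A) := (cfc_const_mul I f (u : A) hcont).symm
    rw [h1, ← CFC.complex_exp_eq_normedSpace_exp,
      ← cfc_comp' Complex.exp (fun z => I * f z) (u : A)
        Complex.continuous_exp.continuousOn (by fun_prop (disch := assumption))]
    calc cfc (fun z => Complex.exp (I * f z)) (u : A)
        = cfc (id : ℂ → ℂ) (u : A) := by
          apply cfc_congr
          intro z hz
          have habs : ((‖z‖ : ℝ) : ℂ) = 1 := by
            norm_cast
            simpa using hsp z hz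
          have := Complex.norm_mul_exp_arg_mul_I z
          rw [habs, one_mul] at this
          simpa [hf, mul_comm] using this
      _ = (u : A) := cfc_id ℂ (u : A)
  exact ⟨⟨a₀, ha_sa⟩, Subtype.ext hexp⟩
end log

lemma pow_prod_eq' {G H : Type*} [Group G] [Group H] (φ : G →* H)
    (hcomm : ∀ x y : H, x * y = y * x) (L : List G) (k : ℕ) :
    φ L.prod ^ k = (L.map fun x => φ x ^ k).prod := by
  induction L with
  | nil => simp
  | cons a t ih =>
      rw [List.prod_cons, map_mul, Commute.mul_pow (hcomm (φ a) (φ t.prod)), List.map_cons,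
        List.prod_cons, ih]

/-- `CU(A)`, the closure of the commutator subgroup of `U(A)`. -/
def CU (A : Type*) [CStarAlgebra A] : Subgroup (unitary A) :=
  (commutator (unitary A)).topologicalClosure

/-- `U₀(A)`, the connected component of the identity in the unitary group. -/
def U₀ (A : Type*) [CStarAlgebra A] : Subgroup (unitary A) :=
  Subgroup.connectedComponentOfOne (unitary A)

instance CU_normal (A : Type*) [CStarAlgebra A] : (CU A).Normal :=
  Subgroup.is_normal_topologicalClosure _

/-- Lemma 6.6 (1): `U₀(A)/CU(A)` is divisible: for every `u ∈ U₀(A)` and every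
`k > 0` there is `v ∈ U₀(A)` with `v̄ᵏ = ū` in `U(A)/CU(A)`. -/
theorem stmt_4 (A : Type*) [CStarAlgebra A] :
    ∀ u ∈ U₀ A, ∀ k : ℕ, 0 < k → ∃ v ∈ U₀ A,
      (QuotientGroup.mk (v ^ k) : unitary A ⧸ (CU A)) = QuotientGroup.mk u := by
  intro u hu k hk
  set S : Subgroup (unitary A) :=
    Subgroup.closure (Set.range (selfAdjoint.expUnitary (A := A))) with hS
  have hSopen : IsOpen (S : Set (unitary A)) := by
    apply Subgroup.isOpen_of_mem_nhds
    have hcont : Continuous fun w : unitary A => ‖(w : A) - 1‖ :=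
      (continuous_subtype_val.sub continuous_const).norm
    have hopen : IsOpen {w : unitary A | ‖(w : A) - 1‖ < 2} :=
      isOpen_lt hcont continuous_const
    refine Filter.mem_of_superset (hopen.mem_nhds (show ‖((1 : unitary A) : A) - 1‖ < 2 by norm_num)) ?_
    intro w hw
    obtain ⟨a, ha⟩ := expUnitary_surj_near w hw
    exact ha ▸ Subgroup.subset_closure ⟨a, rfl⟩
  have hSclosed : IsClosed (S : Set (unitary A)) := S.isClosed_of_isOpen hSopen
  have huS : u ∈ S :=
    IsClopen.connectedComponent_subset ⟨hSclosed, hSopen⟩ (one_mem S)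
      (show u ∈ connectedComponent (1 : unitary A) from hu)
  have hlist : ∃ L : List (selfAdjoint A), (L.map selfAdjoint.expUnitary).prod = u := by
    refine Subgroup.closure_induction ?_ ⟨[], rfl⟩ ?_ ?_ huS
    · rintro x ⟨a, rfl⟩
      exact ⟨[a], by simp⟩
    · rintro x y - - ⟨L₁, rfl⟩ ⟨L₂, rfl⟩
      exact ⟨L₁ ++ L₂, by simp⟩
    · rintro x - ⟨L, rfl⟩
      refine ⟨L.reverse.map (fun a => -a), ?_⟩
      rw [List.prod_inv_reverse]
      simp [List.map_map, Function.comp_def, expUnitary_neg']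
  obtain ⟨L, hL⟩ := hlist
  set v : unitary A := (L.map fun a => selfAdjoint.expUnitary ((k : ℝ)⁻¹ • a)).prod with hv
  have hvU₀ : v ∈ U₀ A := by
    apply Subgroup.list_prod_mem
    intro x hx
    simp only [List.mem_map] at hx
    obtain ⟨a, -, rfl⟩ := hx
    exact show _ ∈ connectedComponent (1 : unitary A) from expUnitary_mem_U₀ _
  refine ⟨v, hvU₀, ?_⟩
  have hroot : ∀ a : selfAdjoint A,
      selfAdjoint.expUnitary ((k : ℝ)⁻¹ • a) ^ k = selfAdjoint.expUnitary a := by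
    intro a
    rw [expUnitary_nsmul']
    congr 1
    rw [← Nat.cast_smul_eq_nsmul ℝ, smul_smul,
      mul_inv_cancel₀ (by positivity : (k : ℝ) ≠ 0), one_smul]
  have hcomm : ∀ x y : unitary A ⧸ CU A, x * y = y * x := by
    intro x y
    induction x using QuotientGroup.induction_on with
    | H a =>
    induction y using QuotientGroup.induction_on with
    | H b =>
    rw [← QuotientGroup.mk_mul, ← QuotientGroup.mk_mul, QuotientGroup.eq]
    open scoped commutatorElement in
    have hgrp : (a * b)⁻¹ * (b * a) = ⁅b⁻¹, a⁻¹⁆ := by group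
    rw [hgrp]
    exact Subgroup.le_topologicalClosure _
      (Subgroup.commutator_mem_commutator (Subgroup.mem_top b⁻¹) (Subgroup.mem_top a⁻¹))
  set φ : unitary A →* unitary A ⧸ CU A := QuotientGroup.mk' (CU A) with hφ
  show φ (v ^ k) = φ u
  calc φ (v ^ k) = φ v ^ k := map_pow φ v k
    _ = ((L.map fun a => selfAdjoint.expUnitary ((k : ℝ)⁻¹ • a)).map fun x => φ x ^ k).prod :=
        pow_prod_eq' φ hcomm _ k
    _ = (L.map fun a => φ (selfAdjoint.expUnitary ((k : ℝ)⁻¹ • a) ^ k)).prod := by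
        rw [List.map_map]; simp [Function.comp_def, map_pow]
    _ = (L.map fun a => φ (selfAdjoint.expUnitary a)).prod := by
        simp only [hroot]
    _ = φ ((L.map selfAdjoint.expUnitary).prod) := by
        rw [map_list_prod, List.map_map]; simp [Function.comp_def]
    _ = φ u := by rw [hL]
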